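/- If the ordered set Λ is well-founded, then Λ* equipped with the Higman ordering is well-founded: there is no infinite strictly decreasing sequence of words x₀ > x₁ > x₂ > ⋯ in Λ*. -/
import Mathlib


/-- The Higman ordering on words over an ordered alphabet `Λ`:
`x ≤ y` iff `y` has a subword that is letterwise above `x`. -/
def HigmanLE {Λ : Type*} [PartialOrder Λ] (x y : List Λ) : Prop :=
  List.SublistForall₂ (· ≤ ·) x y

/-- The strict Higman ordering. -/
def HigmanLT {Λ : Type*} [PartialOrder Λ] (x y : List Λ) : Prop :=
  HigmanLE x y ∧ ¬ HigmanLE y x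

/-- The upper cone `X^Δ` of a set of words. -/
def upperCone {Λ : Type*} [PartialOrder Λ] (X : Set (List Λ)) : Set (List Λ) :=
  {y | ∀ x ∈ X, HigmanLE x y}

/-- The lower cone `X^∇` of a set of words. -/
def lowerCone {Λ : Type*} [PartialOrder Λ] (X : Set (List Λ)) : Set (List Λ) :=
  {y | ∀ x ∈ X, HigmanLE y x}

/-- Elementwise concatenation `XY` of two sets of words. -/
def concatSet {Λ : Type*} (X Y : Set (List Λ)) : Set (List Λ) :=
  {w | ∃ x ∈ X, ∃ y ∈ Y, w = x ++ y}

/-- A (MacNeille) closed upper set of words: `Z = Z^{∇Δ}`. -/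
def ClosedUpper {Λ : Type*} [PartialOrder Λ] (Z : Set (List Λ)) : Prop :=
  Z = upperCone (lowerCone Z)

/-- A (MacNeille) closed lower set of words: `W = W^{Δ∇}`. -/
def ClosedLower {Λ : Type*} [PartialOrder Λ] (W : Set (List Λ)) : Prop :=
  W = lowerCone (upperCone W)

/-- An upper set of words with respect to the Higman ordering. -/
def IsUpperWordSet {Λ : Type*} [PartialOrder Λ] (Z : Set (List Λ)) : Prop :=
  ∀ x y : List Λ, HigmanLE x y → x ∈ Z → y ∈ Z

/-- A finitely generated lower set of words. -/
def FinGenLowerWords {Λ : Type*} [PartialOrder Λ] (S : Set (List Λ)) : Prop :=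
  ∃ F : Finset (List Λ), S = {x | ∃ w ∈ F, HigmanLE x w}

/-- A finitely generated lower set of letters. -/
def FinGenLowerLetters {Λ : Type*} [PartialOrder Λ] (S : Set Λ) : Prop :=
  ∃ F : Finset Λ, S = {x | ∃ w ∈ F, x ≤ w}

/-- Well-foundedness: no infinite strictly decreasing sequence. -/
def NoInfiniteDescent {Λ : Type*} [PartialOrder Λ] : Prop :=
  ¬ ∃ f : ℕ → Λ, ∀ n, f (n + 1) < f n

/-- Stability under the cancellation rule. -/
def StableCancel {Λ : Type*} [PartialOrder Λ] (Z : Set (List Λ)) : Prop :=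
  ∀ (y z : List Λ) (α β : Λ), (¬ ∃ c, c ≤ α ∧ c ≤ β) →
    y ++ α :: z ∈ Z → y ++ β :: z ∈ Z → y ++ z ∈ Z

/-- Stability under the reduction rule. -/
def StableReduce {Λ : Type*} [PartialOrder Λ] (Z : Set (List Λ)) : Prop :=
  ∀ (y z : List Λ) (α γ : Λ), α < γ →
    y ++ α :: α :: z ∈ Z → y ++ γ :: z ∈ Z → y ++ α :: z ∈ Z

/-- Stability under the permutation rule. -/
def StablePerm {Λ : Type*} [PartialOrder Λ] (Z : Set (List Λ)) : Prop :=
  ∀ (y z : List Λ) (α β γ : Λ), ¬ α ≤ β → ¬ β ≤ α → α < γ → β < γ →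
    y ++ α :: β :: z ∈ Z → y ++ γ :: z ∈ Z → y ++ β :: α :: z ∈ Z

/-- Stability under the meet rule. -/
def StableMeet {Λ : Type*} [PartialOrder Λ] (Z : Set (List Λ)) : Prop :=
  ∀ (y z : List Λ) (α β m : Λ), ¬ α ≤ β → ¬ β ≤ α →
    IsGLB ({α, β} : Set Λ) m →
    y ++ α :: z ∈ Z → y ++ β :: z ∈ Z → y ++ m :: z ∈ Z

/-- Stability under all four rules. -/
def StableAll {Λ : Type*} [PartialOrder Λ] (Z : Set (List Λ)) : Prop :=
  StableCancel Z ∧ StableReduce Z ∧ StablePerm Z ∧ StableMeet Z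

/-- `[Y]`: the smallest upper set containing `Y` that is stable under the four rules. -/
def stableClosure {Λ : Type*} [PartialOrder Λ] (Y : Set (List Λ)) : Set (List Λ) :=
  ⋂₀ {Z : Set (List Λ) | Y ⊆ Z ∧ IsUpperWordSet Z ∧ StableAll Z}

section Aux
open Relation Multiset

variable {Λ : Type*} [PartialOrder Λ]

lemma transGen_cutExpand_add_nonzero {α : Type*} {r : α → α → Prop} (s u : Multiset α)
    (hu : u ≠ 0) : Relation.TransGen (CutExpand r) s (s + u) := by
  induction u using Multiset.induction generalizing s with
  | empty => exact absurd rfl hu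
  | cons a u ih =>
    have step : CutExpand r (s + u) (s + a ::ₘ u) :=
      ⟨0, a, by simp, by rw [add_zero, add_comm _ ({a} : Multiset α), Multiset.singleton_add, Multiset.add_cons]⟩
    rcases eq_or_ne u 0 with rfl | h
    · simpa using Relation.TransGen.single step
    · exact (ih s h).tail step

lemma transGen_cutExpand_cons {α : Type*} {r : α → α → Prop} {s t : Multiset α} (a : α)
    (h : Relation.TransGen (CutExpand r) s t) :
    Relation.TransGen (CutExpand r) (a ::ₘ s) (a ::ₘ t) := by
  induction h with
  | single hst => exact Relation.TransGen.single (by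
      simpa [Multiset.singleton_add] using (cutExpand_add_left ({a} : Multiset α)).2 hst)
  | tail _ hst ih => exact ih.tail (by
      simpa [Multiset.singleton_add] using (cutExpand_add_left ({a} : Multiset α)).2 hst)

lemma higmanLE_transGen (x y : List Λ) (h : List.SublistForall₂ (· ≤ ·) x y) :
    Relation.TransGen (CutExpand ((· < ·) : Λ → Λ → Prop)) (↑x) (↑y) ∨ x = y := by
  induction h with
  | nil =>
    rename_i l
    rcases eq_or_ne l [] with rfl | hl
    · exact Or.inr rfl
    · left
      have : ((l : Multiset Λ)) ≠ 0 := by simpa using hl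
      simpa using transGen_cutExpand_add_nonzero 0 (l : Multiset Λ) this
  | @cons a b x' y' hab _ ih =>
    rcases lt_or_eq_of_le hab with hlt | rfl
    · left
      have step : CutExpand ((· < ·) : Λ → Λ → Prop) (a ::ₘ (y' : Multiset Λ)) (b ::ₘ (y' : Multiset Λ)) :=
        ⟨{a}, b, by simpa using hlt, by
          simp only [← Multiset.cons_coe, ← Multiset.singleton_add]; abel⟩
      rcases ih with htg | rfl
      · have := (transGen_cutExpand_cons a htg).tail step
        simpa using this
      · simpa using Relation.TransGen.single step
    · rcases ih with htg | rfl
      · left; simpa using transGen_cutExpand_cons a htg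
      · exact Or.inr rfl
  | @cons_right b x' y' _ ih =>
    left
    have step : CutExpand ((· < ·) : Λ → Λ → Prop) (y' : Multiset Λ) (b ::ₘ (y' : Multiset Λ)) :=
      ⟨0, b, by simp, by rw [add_zero, add_comm, Multiset.singleton_add, Multiset.cons_coe]⟩
    rw [← Multiset.cons_coe]
    rcases ih with htg | rfl
    · exact htg.tail step
    · exact Relation.TransGen.single step



end Aux

/-- if `Λ` is well-founded then `Λ*` with the Higman ordering is
well-founded: there is no infinite strictly decreasing sequence of words. -/


theorem higman_wellFounded {Λ : Type*} [PartialOrder Λ]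
    (hwf : NoInfiniteDescent (Λ := Λ)) :
    ¬ ∃ f : ℕ → List Λ, ∀ n, HigmanLT (f (n + 1)) (f n) := by
  have wfL : WellFounded ((· < ·) : Λ → Λ → Prop) := by
    rw [RelEmbedding.wellFounded_iff_isEmpty]
    constructor
    intro f
    exact hwf ⟨f, fun n => f.map_rel_iff.2 (Nat.lt_succ_self n)⟩
  have wfT : WellFounded
      (Relation.TransGen (Relation.CutExpand ((· < ·) : Λ → Λ → Prop))) :=
    wfL.cutExpand.transGen
  rintro ⟨f, hf⟩
  have key : ∀ n, Relation.TransGen (Relation.CutExpand ((· < ·) : Λ → Λ → Prop))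
      (↑(f (n + 1))) (↑(f n)) := by
    intro n
    rcases higmanLE_transGen _ _ (hf n).1 with h | h
    · exact h
    · exact absurd (show HigmanLE (f n) (f (n + 1)) by
        rw [h]; exact refl_of (List.SublistForall₂ (· ≤ ·)) _) (hf n).2
  have : ∀ b : Multiset Λ, ∀ n, (↑(f n) : Multiset Λ) = b → False := by
    intro b
    induction b using wfT.induction with
    | _ b ih =>
      rintro n rfl
      exact ih _ (key n) (n + 1) rfl
  exact this _ 0 rfl
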